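/- The set of elements of G of cycle type [2,2,2] forms a single conjugacy class of G of size 6. -/

import Mathlib

set_option maxRecDepth 40000

/-- Permutations of the six labels `{r,g,b,x,y,z}` (encoded as `0,...,5`) that fix the
flavor labels `x,y,z` (indices `3,4,5`) pointwise, hence permute the colors
`r,g,b` (indices `0,1,2`) arbitrarily. -/
def colorPerms : Set (Equiv.Perm (Fin 6)) := {g | ∀ i : Fin 6, 3 ≤ (i : ℕ) → g i = i}

/-- Permutations fixing the color labels `r,g,b` (indices `0,1,2`) pointwise,
hence permuting the flavors `x,y,z` arbitrarily. -/
def flavorPerms : Set (Equiv.Perm (Fin 6)) := {g | ∀ i : Fin 6, (i : ℕ) < 3 → g i = i}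

/-- The color-flavor swap `(r x)(g y)(b z)`. -/
def cfSwap : Equiv.Perm (Fin 6) := Equiv.swap 0 3 * Equiv.swap 1 4 * Equiv.swap 2 5

/-- The color code automorphism group: the subgroup of `S₆` generated by color
permutations, flavor permutations, and the color-flavor swap. -/
def ccAut : Subgroup (Equiv.Perm (Fin 6)) :=
  Subgroup.closure (colorPerms ∪ flavorPerms ∪ {cfSwap})

/-! ### Auxiliary definitions -/

/-- The six color permutations (elements of `S₃` on `{0,1,2}`). -/
def cc1 : Equiv.Perm (Fin 6) := 1
def cc2 : Equiv.Perm (Fin 6) := Equiv.swap 1 2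
def cc3 : Equiv.Perm (Fin 6) := Equiv.swap 0 1
def cc4 : Equiv.Perm (Fin 6) := Equiv.swap 0 1 * Equiv.swap 1 2
def cc5 : Equiv.Perm (Fin 6) := Equiv.swap 1 2 * Equiv.swap 0 1
def cc6 : Equiv.Perm (Fin 6) := Equiv.swap 0 2

def ee1 : Equiv.Perm (Fin 6) := cc1 * cfSwap * cc1⁻¹
def ee2 : Equiv.Perm (Fin 6) := cc2 * cfSwap * cc2⁻¹
def ee3 : Equiv.Perm (Fin 6) := cc3 * cfSwap * cc3⁻¹
def ee4 : Equiv.Perm (Fin 6) := cc4 * cfSwap * cc4⁻¹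
def ee5 : Equiv.Perm (Fin 6) := cc5 * cfSwap * cc5⁻¹
def ee6 : Equiv.Perm (Fin 6) := cc6 * cfSwap * cc6⁻¹

/-- The block property: preserves or swaps the blocks `{0,1,2}`, `{3,4,5}`. -/
def blockP (g : Equiv.Perm (Fin 6)) : Prop :=
  (∀ i : Fin 6, (i : ℕ) < 3 ↔ ((g i : ℕ) < 3)) ∨
    (∀ i : Fin 6, (i : ℕ) < 3 ↔ 3 ≤ ((g i : ℕ)))

lemma blockP_one : blockP 1 := Or.inl fun i => by simp

lemma blockP_mul {g h : Equiv.Perm (Fin 6)} (hg : blockP g) (hh : blockP h) :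
    blockP (g * h) := by
  rcases hg with hg | hg <;> rcases hh with hh | hh
  · refine Or.inl fun i => ?_
    have h1 := hh i; have h2 := hg (h i)
    simp only [Equiv.Perm.mul_apply]; omega
  · refine Or.inr fun i => ?_
    have h1 := hh i; have h2 := hg (h i)
    simp only [Equiv.Perm.mul_apply]; omega
  · refine Or.inr fun i => ?_
    have h1 := hh i; have h2 := hg (h i)
    simp only [Equiv.Perm.mul_apply]; omega
  · refine Or.inl fun i => ?_
    have h1 := hh i; have h2 := hg (h i)
    simp only [Equiv.Perm.mul_apply]; omega

lemma blockP_inv {g : Equiv.Perm (Fin 6)} (hg : blockP g) : blockP g⁻¹ := by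
  rcases hg with hg | hg
  · refine Or.inl fun i => ?_
    have := hg (g⁻¹ i)
    simpa using this.symm
  · refine Or.inr fun i => ?_
    have := hg (g⁻¹ i)
    rw [show g (g⁻¹ i) = i by simp] at this
    omega

/-- The subgroup of block-preserving-or-swapping permutations. -/
def blockSub : Subgroup (Equiv.Perm (Fin 6)) where
  carrier := {g | blockP g}
  one_mem' := blockP_one
  mul_mem' := blockP_mul
  inv_mem' := blockP_inv

lemma ccAut_le_blockSub : ccAut ≤ blockSub := by
  rw [ccAut, Subgroup.closure_le]
  rintro g ((hg | hg) | hg)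
  · -- colorPerms
    refine Or.inl fun i => ?_
    constructor
    · intro hi
      by_contra h3
      have h3' : 3 ≤ ((g i : ℕ)) := by omega
      have := hg (g i) h3'
      have : g i = i := g.injective this
      omega
    · intro hgi
      by_contra h3
      have := hg i (by omega)
      rw [this] at hgi; omega
  · -- flavorPerms
    refine Or.inl fun i => ?_
    constructor
    · intro hi
      have := hg i hi
      rw [this]; exact hi
    · intro hgi
      by_contra h3
      have h3' : 3 ≤ (i : ℕ) := by omega
      by_cases hc : ((g i : ℕ)) < 3
      · have := hg (g i) hc
        have : g i = i := g.injective this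
        omega
      · omega
  · -- cfSwap
    simp only [Set.mem_singleton_iff] at hg
    subst hg
    exact Or.inr (by decide)

/-- Membership of generators. -/
lemma cfSwap_mem : cfSwap ∈ ccAut :=
  Subgroup.subset_closure (Or.inr rfl)

lemma color_mem {g : Equiv.Perm (Fin 6)} (hg : g ∈ colorPerms) : g ∈ ccAut :=
  Subgroup.subset_closure (Or.inl (Or.inl hg))

lemma cc2_mem : cc2 ∈ ccAut :=
  color_mem (show ∀ i : Fin 6, 3 ≤ (i : ℕ) → cc2 i = i by decide)
lemma cc3_mem : cc3 ∈ ccAut :=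
  color_mem (show ∀ i : Fin 6, 3 ≤ (i : ℕ) → cc3 i = i by decide)
lemma cc4_mem : cc4 ∈ ccAut :=
  color_mem (show ∀ i : Fin 6, 3 ≤ (i : ℕ) → cc4 i = i by decide)
lemma cc5_mem : cc5 ∈ ccAut :=
  color_mem (show ∀ i : Fin 6, 3 ≤ (i : ℕ) → cc5 i = i by decide)
lemma cc6_mem : cc6 ∈ ccAut :=
  color_mem (show ∀ i : Fin 6, 3 ≤ (i : ℕ) → cc6 i = i by decide)

lemma ee1_mem : ee1 ∈ ccAut := by
  unfold ee1
  exact mul_mem (mul_mem (one_mem _) cfSwap_mem) (inv_mem (one_mem _))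
lemma ee2_mem : ee2 ∈ ccAut := mul_mem (mul_mem cc2_mem cfSwap_mem) (inv_mem cc2_mem)
lemma ee3_mem : ee3 ∈ ccAut := mul_mem (mul_mem cc3_mem cfSwap_mem) (inv_mem cc3_mem)
lemma ee4_mem : ee4 ∈ ccAut := mul_mem (mul_mem cc4_mem cfSwap_mem) (inv_mem cc4_mem)
lemma ee5_mem : ee5 ∈ ccAut := mul_mem (mul_mem cc5_mem cfSwap_mem) (inv_mem cc5_mem)
lemma ee6_mem : ee6 ∈ ccAut := mul_mem (mul_mem cc6_mem cfSwap_mem) (inv_mem cc6_mem)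

/-- A fixed-point-free involution of `Fin 6` has cycle type `{2,2,2}`. -/
lemma cycleType_of_fpf_involution (g : Equiv.Perm (Fin 6)) (h2 : g * g = 1)
    (hf : ∀ i, g i ≠ i) : g.cycleType = {2, 2, 2} := by
  have hne : g ≠ 1 := by
    intro h; exact hf 0 (by rw [h]; rfl)
  have horder : orderOf g = 2 := by
    refine orderOf_eq_prime ?_ hne
    rw [pow_two]; exact h2
  have hmem : ∀ n ∈ g.cycleType, n = 2 := by
    intro n hn
    have h1 : 2 ≤ n := Equiv.Perm.two_le_of_mem_cycleType hn
    have h2' : n ∣ 2 := by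
      rw [← horder, ← Equiv.Perm.lcm_cycleType]
      exact Multiset.dvd_lcm hn
    have := Nat.le_of_dvd (by norm_num) h2'
    omega
  have hsum : g.cycleType.sum = 6 := by
    rw [Equiv.Perm.sum_cycleType]
    have : g.support = Finset.univ := by
      ext i; simp [Equiv.Perm.mem_support, hf i]
    rw [this]
    simp
  have hrep : g.cycleType = Multiset.replicate (Multiset.card g.cycleType) 2 :=
    Multiset.eq_replicate_card.mpr hmem
  have hcard : Multiset.card g.cycleType = 3 := by
    have := hsum
    rw [hrep, Multiset.sum_replicate, smul_eq_mul] at this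
    omega
  rw [hrep, hcard]
  rfl

/-- Every element of `ccAut` with cycle type `{2,2,2}` is one of the six pairings. -/
lemma key_classification : ∀ g : Equiv.Perm (Fin 6),
    ((∀ i : Fin 6, (i : ℕ) < 3 ↔ ((g i : ℕ) < 3)) ∨
      (∀ i : Fin 6, (i : ℕ) < 3 ↔ 3 ≤ ((g i : ℕ)))) → g * g = 1 →
    (∀ i, g i ≠ i) →
    g = ee1 ∨ g = ee2 ∨ g = ee3 ∨ g = ee4 ∨ g = ee5 ∨ g = ee6 := by decide

lemma cfSwap_cycleType : cfSwap.cycleType = {2, 2, 2} :=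
  cycleType_of_fpf_involution _ (by decide) (by decide)

lemma conj_cycleType {c g : Equiv.Perm (Fin 6)} :
    (c * g * c⁻¹).cycleType = g.cycleType := Equiv.Perm.cycleType_conj

lemma ee_cycleType :
    ee1.cycleType = {2,2,2} ∧ ee2.cycleType = {2,2,2} ∧ ee3.cycleType = {2,2,2} ∧
    ee4.cycleType = {2,2,2} ∧ ee5.cycleType = {2,2,2} ∧ ee6.cycleType = {2,2,2} := by
  refine ⟨?_, ?_, ?_, ?_, ?_, ?_⟩ <;>
    first
      | exact (conj_cycleType (g := cfSwap)).trans cfSwap_cycleType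

/-- From cycle type `{2,2,2}` deduce fpf involution. -/
lemma fpf_of_cycleType {g : Equiv.Perm (Fin 6)} (h : g.cycleType = {2, 2, 2}) :
    g * g = 1 ∧ ∀ i, g i ≠ i := by
  constructor
  · have horder : orderOf g = 2 := by
      rw [← Equiv.Perm.lcm_cycleType, h]; rfl
    have := pow_orderOf_eq_one g
    rwa [horder, pow_two] at this
  · intro i
    have hsum : g.support.card = 6 := by
      rw [← Equiv.Perm.sum_cycleType, h]; rfl
    have : g.support = Finset.univ := Finset.eq_univ_of_card _ (by rw [hsum]; rfl)
    have hi : i ∈ g.support := this ▸ Finset.mem_univ i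
    exact Equiv.Perm.mem_support.mp hi

/-- The elements of `G` of cycle type `[2,2,2]` form a single conjugacy class of `G`,
of size 6. -/
theorem ccAut_cycleType_222_conjClass :
    (∃ a : ccAut, {b : ccAut | (b : Equiv.Perm (Fin 6)).cycleType = {2, 2, 2}}
        = {b : ccAut | IsConj a b}) ∧
      {b : ccAut | (b : Equiv.Perm (Fin 6)).cycleType = {2, 2, 2}}.ncard = 6 := by
  set S : Set ccAut := {b : ccAut | (b : Equiv.Perm (Fin 6)).cycleType = {2, 2, 2}} with hS
  have hclass : ∀ b : ccAut, b ∈ S →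
      (b : Equiv.Perm (Fin 6)) = ee1 ∨ (b : Equiv.Perm (Fin 6)) = ee2 ∨
      (b : Equiv.Perm (Fin 6)) = ee3 ∨ (b : Equiv.Perm (Fin 6)) = ee4 ∨
      (b : Equiv.Perm (Fin 6)) = ee5 ∨ (b : Equiv.Perm (Fin 6)) = ee6 := by
    intro b hb
    obtain ⟨h2, hf⟩ := fpf_of_cycleType hb
    have hbP : blockP (b : Equiv.Perm (Fin 6)) := ccAut_le_blockSub b.2
    exact key_classification _ hbP h2 hf
  constructor
  · refine ⟨⟨cfSwap, cfSwap_mem⟩, ?_⟩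
    ext b
    simp only [hS, Set.mem_setOf_eq]
    constructor
    · intro hb
      rw [isConj_iff]
      rcases hclass b hb with h | h | h | h | h | h
      · exact ⟨⟨cc1, one_mem _⟩, Subtype.ext (by rw [h]; rfl)⟩
      · exact ⟨⟨cc2, cc2_mem⟩, Subtype.ext (by rw [h]; rfl)⟩
      · exact ⟨⟨cc3, cc3_mem⟩, Subtype.ext (by rw [h]; rfl)⟩
      · exact ⟨⟨cc4, cc4_mem⟩, Subtype.ext (by rw [h]; rfl)⟩
      · exact ⟨⟨cc5, cc5_mem⟩, Subtype.ext (by rw [h]; rfl)⟩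
      · exact ⟨⟨cc6, cc6_mem⟩, Subtype.ext (by rw [h]; rfl)⟩
    · intro hb
      rw [isConj_iff] at hb
      obtain ⟨c, hc⟩ := hb
      have := congrArg Subtype.val hc
      push_cast at this
      rw [← this]
      exact conj_cycleType.trans cfSwap_cycleType
  · -- cardinality
    have himg : Subtype.val '' S = (↑({ee1, ee2, ee3, ee4, ee5, ee6} : Finset (Equiv.Perm (Fin 6))) : Set (Equiv.Perm (Fin 6))) := by
      ext x
      simp only [Set.mem_image, Finset.coe_insert, Set.mem_insert_iff, Finset.coe_singleton,
        Set.mem_singleton_iff]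
      constructor
      · rintro ⟨b, hb, rfl⟩
        exact hclass b hb
      · obtain ⟨t1, t2, t3, t4, t5, t6⟩ := ee_cycleType
        rintro (rfl | rfl | rfl | rfl | rfl | rfl)
        · exact ⟨⟨ee1, ee1_mem⟩, t1, rfl⟩
        · exact ⟨⟨ee2, ee2_mem⟩, t2, rfl⟩
        · exact ⟨⟨ee3, ee3_mem⟩, t3, rfl⟩
        · exact ⟨⟨ee4, ee4_mem⟩, t4, rfl⟩
        · exact ⟨⟨ee5, ee5_mem⟩, t5, rfl⟩
        · exact ⟨⟨ee6, ee6_mem⟩, t6, rfl⟩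
    have hinj : Set.InjOn Subtype.val S := Subtype.val_injective.injOn
    have := Set.ncard_image_of_injOn hinj
    rw [himg, Set.ncard_coe_finset] at this
    rw [← this]
    decide
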